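/- Density of Floquet multipliers in the unit circle (justification of Remark 3.5 / equation (3.y)): Let T_per > 0 and let A = (A₁, A₂) : ℝ → ℝ² be continuously differentiable and T_per-periodic with ∫₀^{T_per} A₁(T) dT = ∫₀^{T_per} A₂(T) dT = 0. Then for every z ∈ ℂ with |z| = 1 and every δ > 0, there exist a real number ξ, a fundamental solution U_ξ of i U′(T) = [ξ σ₁ + A₁(T) σ₁ − A₂(T) σ₂] U(T), and an eigenvalue w of the monodromy matrix U_ξ(T_per), such that |w − z| < δ. In other words, the Floquet multipliers of the family of forced Dirac systems, taken over all momenta ξ ∈ ℝ, are dense in the unit circle S¹. -/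

import Mathlib

open Matrix Complex intervalIntegral
open scoped NNReal

noncomputable section

/-- The Pauli matrix `σ₁ = [[0,1],[1,0]]`. -/
def pauli1 : Matrix (Fin 2) (Fin 2) ℂ := !![0, 1; 1, 0]

/-- The Pauli matrix `σ₂ = [[0,−i],[i,0]]`. -/
def pauli2 : Matrix (Fin 2) (Fin 2) ℂ := !![0, -Complex.I; Complex.I, 0]

/-- The forced Dirac generator `D(T) = ξ σ₁ + A₁(T) σ₁ − A₂(T) σ₂`. -/
def Dwkb (A : ℝ → ℝ × ℝ) (ξ : ℝ) (T : ℝ) : Matrix (Fin 2) (Fin 2) ℂ :=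
  (ξ : ℂ) • pauli1 + ((A T).1 : ℂ) • pauli1 - ((A T).2 : ℂ) • pauli2

/-- `U : ℝ → M₂(ℂ)` is a fundamental solution of `i U′(T) = D(T) U(T)`:
`U(0) = I` and (entrywise) `U′(T) = −i D(T) U(T)` for every `T`. -/
def IsFundamentalSolution (D U : ℝ → Matrix (Fin 2) (Fin 2) ℂ) : Prop :=
  U 0 = 1 ∧
  ∀ T : ℝ, ∀ i j : Fin 2,
    HasDerivAt (fun t : ℝ => U t i j) (((-Complex.I) • (D T * U T)) i j) T

abbrev M2 := Matrix (Fin 2) (Fin 2) ℂ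
attribute [local instance] Matrix.linftyOpNormedAddCommGroup Matrix.linftyOpNormedRing
  Matrix.linftyOpNormedAlgebra Matrix.linftyOpNormedSpace
instance : TopologicalSpace.PseudoMetrizableSpace M2 :=
  inferInstanceAs (TopologicalSpace.PseudoMetrizableSpace (Fin 2 → Fin 2 → ℂ))

lemma entry_le_norm (X : M2) (i j : Fin 2) : ‖X i j‖ ≤ ‖X‖ := by
  have h1 : ‖X i j‖₊ ≤ ∑ k : Fin 2, ‖X i k‖₊ :=
    Finset.single_le_sum (f := fun k => ‖X i k‖₊) (fun _ _ => zero_le) (Finset.mem_univ j)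
  have h2 : (∑ k : Fin 2, ‖X i k‖₊) ≤ ‖X‖₊ := by
    rw [linfty_opNNNorm_def]
    exact Finset.le_sup (f := fun i : Fin 2 => ∑ k : Fin 2, ‖X i k‖₊) (Finset.mem_univ i)
  exact_mod_cast h1.trans h2

lemma norm_le_of_entries (X : M2) (r : ℝ) (h : ∀ i j, ‖X i j‖ ≤ r) : ‖X‖ ≤ 2 * r := by
  have hr : 0 ≤ r := le_trans (norm_nonneg _) (h 0 0)
  rw [linfty_opNorm_def]
  have key : ∀ i : Fin 2, (∑ j : Fin 2, ‖X i j‖₊ : ℝ≥0) ≤ ⟨2*r, by positivity⟩ := by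
    intro i
    have e : (∑ j : Fin 2, ‖X i j‖₊ : ℝ≥0) = ‖X i 0‖₊ + ‖X i 1‖₊ := by
      rw [Fin.sum_univ_two]
    rw [e]
    refine NNReal.coe_le_coe.1 ?_
    push_cast
    change _ ≤ 2 * r
    linarith [h i 0, h i 1]
  calc ((Finset.univ.sup fun i : Fin 2 => ∑ j : Fin 2, ‖X i j‖₊ : ℝ≥0) : ℝ)
      ≤ ((⟨2*r, by positivity⟩ : ℝ≥0) : ℝ) := by
        exact_mod_cast Finset.sup_le fun i _ => key i
    _ = 2 * r := rfl

def pauli3 : M2 := !![1, 0; 0, -1]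
def rotm (x : ℝ) : M2 :=
  !![(Real.cos x : ℂ), -Complex.I * Real.sin x; -Complex.I * Real.sin x, (Real.cos x : ℂ)]
def Bcore (x : ℝ) : M2 := (Real.cos (2*x) : ℂ) • pauli2 - (Real.sin (2*x) : ℂ) • pauli3

lemma rotm_zero : rotm 0 = 1 := by
  ext i j; fin_cases i <;> fin_cases j <;> simp [rotm]

lemma key_identity (x : ℝ) : rotm x * Bcore x = pauli2 * rotm x := by
  ext i j
  fin_cases i <;> fin_cases j <;>
    simp [rotm, Bcore, pauli2, pauli3, Matrix.mul_apply, Fin.sum_univ_two,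
      Real.cos_two_mul, Real.sin_two_mul] <;> ring_nf <;>
    simp [Complex.I_sq, Complex.sin_sq] <;> ring

lemma sigma1_rotm (x : ℝ) :
    pauli1 * rotm x = (Real.cos x : ℂ) • pauli1 + (Real.sin x : ℂ) • ((-Complex.I) • 1) := by
  ext i j
  fin_cases i <;> fin_cases j <;>
    simp [rotm, pauli1, Matrix.mul_apply, Fin.sum_univ_two] <;> ring

lemma rotm_eq (x : ℝ) :
    rotm x = (Real.cos x : ℂ) • (1 : M2) + (Real.sin x : ℂ) • ((-Complex.I) • pauli1) := by
  ext i j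
  fin_cases i <;> fin_cases j <;> simp [rotm, pauli1] <;> ring

section Construction
variable (A : ℝ → ℝ × ℝ) (ξ : ℝ)

def theta (T : ℝ) : ℝ := ξ * T + ∫ s in (0:ℝ)..T, (A s).1
def Bmat (T : ℝ) : M2 := (Complex.I * ((A T).2 : ℂ)) • Bcore (theta A ξ T)
def dysonW : ℕ → ℝ → M2
  | 0 => fun _ => 1
  | (n+1) => fun T => ∫ s in (0:ℝ)..T, Bmat A ξ s * dysonW n s
def Vsol (T : ℝ) : M2 := ∑' n, dysonW A ξ n T
def Usol (T : ℝ) : M2 := rotm (theta A ξ T) * Vsol A ξ T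
/-- derivative summands -/
def dysonD : ℕ → ℝ → M2
  | 0 => fun _ => 0
  | (n+1) => fun T => Bmat A ξ T * dysonW A ξ n T

variable {A} (hA : Continuous A)
include hA

lemma contA1 : Continuous fun t => (A t).1 := (continuous_fst.comp hA)
lemma contA2 : Continuous fun t => (A t).2 := (continuous_snd.comp hA)

lemma theta_hasDeriv (T : ℝ) : HasDerivAt (theta A ξ) (ξ + (A T).1) T := by
  have h1 : HasDerivAt (fun t : ℝ => ξ * t) ξ T := by
    simpa using (hasDerivAt_id T).const_mul ξ
  have h2 : HasDerivAt (fun t : ℝ => ∫ s in (0:ℝ)..t, (A s).1) ((A T).1) T :=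
    intervalIntegral.integral_hasDerivAt_right ((contA1 hA).intervalIntegrable _ _)
      ((contA1 hA).stronglyMeasurableAtFilter _ _) (contA1 hA).continuousAt
  exact h1.fun_add h2

lemma cont_theta : Continuous (theta A ξ) := by
  have : Differentiable ℝ (theta A ξ) := fun T => (theta_hasDeriv ξ hA T).differentiableAt
  exact this.continuous

lemma cont_rotm_theta : Continuous fun t => rotm (theta A ξ t) := by
  have ht := cont_theta ξ hA
  simp only [rotm_eq]
  exact ((Complex.continuous_ofReal.comp (Real.continuous_cos.comp ht)).smul
      continuous_const).add
    ((Complex.continuous_ofReal.comp (Real.continuous_sin.comp ht)).smul continuous_const)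

lemma cont_Bmat : Continuous (Bmat A ξ) := by
  have ht := cont_theta ξ hA
  have h2 := contA2 hA
  unfold Bmat Bcore
  apply Continuous.fun_smul
  · exact continuous_const.mul (Complex.continuous_ofReal.comp h2)
  · exact ((Complex.continuous_ofReal.comp (Real.continuous_cos.comp
      (continuous_const.mul ht))).smul continuous_const).sub
      ((Complex.continuous_ofReal.comp (Real.continuous_sin.comp
      (continuous_const.mul ht))).smul continuous_const)

lemma cont_dysonW (n : ℕ) : Continuous (dysonW A ξ n) := by
  induction n with
  | zero => exact continuous_const
  | succ n ih =>
    show Continuous fun T => ∫ s in (0:ℝ)..T, Bmat A ξ s * dysonW A ξ n s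
    have hc : Continuous fun s => Bmat A ξ s * dysonW A ξ n s := (cont_Bmat ξ hA).mul ih
    exact intervalIntegral.continuous_primitive (fun a b => (hc.intervalIntegrable a b)) 0

lemma dysonW_succ_hasDeriv (n : ℕ) (T : ℝ) :
    HasDerivAt (dysonW A ξ (n+1)) (Bmat A ξ T * dysonW A ξ n T) T := by
  have hc : Continuous fun s => Bmat A ξ s * dysonW A ξ n s :=
    (cont_Bmat ξ hA).mul (cont_dysonW ξ hA n)
  exact intervalIntegral.integral_hasDerivAt_right (hc.intervalIntegrable _ _)
    (hc.stronglyMeasurableAtFilter _ _) hc.continuousAt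

variable {c : ℝ} (hc : ∀ t, ‖Bmat A ξ t‖ ≤ c)
include hc

lemma c_nonneg : 0 ≤ c := le_trans (norm_nonneg _) (hc 0)

lemma dysonW_bound (n : ℕ) (T : ℝ) :
    ‖dysonW A ξ n T‖ ≤ (c * |T|) ^ n / n.factorial := by
  induction n generalizing T with
  | zero => simp [dysonW]
  | succ n ih =>
    have hc0 : (0:ℝ) ≤ c := c_nonneg ξ hA hc
    have hcont : Continuous fun s => Bmat A ξ s * dysonW A ξ n s :=
      (cont_Bmat ξ hA).mul (cont_dysonW ξ hA n)
    have hbound : ∀ s : ℝ, ‖Bmat A ξ s * dysonW A ξ n s‖ ≤ c * (c * |s|) ^ n / n.factorial := by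
      intro s
      calc ‖Bmat A ξ s * dysonW A ξ n s‖ ≤ ‖Bmat A ξ s‖ * ‖dysonW A ξ n s‖ := norm_mul_le _ _
        _ ≤ c * ((c * |s|) ^ n / n.factorial) := by
            apply mul_le_mul (hc s) (ih s) (norm_nonneg _) hc0
        _ = c * (c * |s|) ^ n / n.factorial := by ring
    rcases le_total 0 T with hT | hT
    · have h1 : ‖dysonW A ξ (n+1) T‖ ≤ ∫ s in (0:ℝ)..T, c * (c * s) ^ n / n.factorial := by
        show ‖∫ s in (0:ℝ)..T, Bmat A ξ s * dysonW A ξ n s‖ ≤ _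
        refine (intervalIntegral.norm_integral_le_integral_norm hT).trans ?_
        apply intervalIntegral.integral_mono_on hT
          (hcont.norm.intervalIntegrable _ _)
          (((continuous_const.mul ((continuous_const.mul continuous_id).pow n)).div_const
            _).intervalIntegrable _ _)
        intro s hs
        have : |s| = s := _root_.abs_of_nonneg hs.1
        simpa [this] using hbound s
      refine h1.trans ?_
      have h2 : ∫ s in (0:ℝ)..T, c * (c * s) ^ n / n.factorial
          = c ^ (n+1) / n.factorial * ∫ s in (0:ℝ)..T, s ^ n := by
        rw [← intervalIntegral.integral_const_mul]
        apply intervalIntegral.integral_congr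
        intro s _
        simp [mul_pow]
        ring
      rw [h2, integral_pow, _root_.abs_of_nonneg hT, Nat.factorial_succ]
      apply le_of_eq
      have hf : ((n.factorial:ℝ)) ≠ 0 := Nat.cast_ne_zero.2 (Nat.factorial_ne_zero n)
      have hn1 : ((n:ℝ)+1) ≠ 0 := by positivity
      push_cast
      field_simp
      ring
    · -- T ≤ 0
      have h1 : ‖dysonW A ξ (n+1) T‖ ≤ ∫ s in T..(0:ℝ), c * (c * (-s)) ^ n / n.factorial := by
        show ‖∫ s in (0:ℝ)..T, Bmat A ξ s * dysonW A ξ n s‖ ≤ _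
        rw [intervalIntegral.integral_symm, norm_neg]
        refine (intervalIntegral.norm_integral_le_integral_norm hT).trans ?_
        apply intervalIntegral.integral_mono_on hT
          (hcont.norm.intervalIntegrable _ _)
          (((continuous_const.mul ((continuous_const.mul continuous_neg).pow n)).div_const
            _).intervalIntegrable _ _)
        intro s hs
        have : |s| = -s := _root_.abs_of_nonpos hs.2
        simpa [this] using hbound s
      refine h1.trans ?_
      have h2 : ∫ s in T..(0:ℝ), c * (c * (-s)) ^ n / n.factorial
          = c ^ (n+1) / n.factorial * ∫ s in (0:ℝ)..(-T), s ^ n := by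
        have := intervalIntegral.integral_comp_neg (a := T) (b := (0:ℝ))
          (fun s => c * (c * s) ^ n / (n.factorial:ℝ))
        rw [neg_zero] at this
        rw [this, ← intervalIntegral.integral_const_mul]
        apply intervalIntegral.integral_congr
        intro s _
        simp [mul_pow]
        ring
      rw [h2, integral_pow, _root_.abs_of_nonpos hT, Nat.factorial_succ]
      apply le_of_eq
      have hf : ((n.factorial:ℝ)) ≠ 0 := Nat.cast_ne_zero.2 (Nat.factorial_ne_zero n)
      have hn1 : ((n:ℝ)+1) ≠ 0 := by positivity
      push_cast
      field_simp
      ring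

lemma dysonW_summable (T : ℝ) : Summable fun n => dysonW A ξ n T := by
  apply Summable.of_norm_bounded (Real.summable_pow_div_factorial (c * |T|))
  exact fun n => dysonW_bound ξ hA hc n T

lemma Vsol_zero : Vsol A ξ 0 = 1 := by
  have h : ∀ n, dysonW A ξ (n+1) 0 = 0 := by intro n; simp [dysonW]
  rw [Vsol, Summable.tsum_eq_zero_add (dysonW_summable ξ hA hc 0)]
  simp [h, dysonW]

lemma dysonD_summable (T : ℝ) : Summable fun n => dysonD A ξ n T := by
  rw [← summable_nat_add_iff 1]
  apply Summable.of_norm_bounded (((Real.summable_pow_div_factorial (c * |T|)).mul_left c))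
  intro n
  show ‖Bmat A ξ T * dysonW A ξ n T‖ ≤ _
  calc ‖Bmat A ξ T * dysonW A ξ n T‖ ≤ ‖Bmat A ξ T‖ * ‖dysonW A ξ n T‖ := norm_mul_le _ _
    _ ≤ c * ((c * |T|) ^ n / n.factorial) :=
        mul_le_mul (hc T) (dysonW_bound ξ hA hc n T) (norm_nonneg _) (c_nonneg ξ hA hc)

lemma dysonD_tsum (T : ℝ) : ∑' n, dysonD A ξ n T = Bmat A ξ T * Vsol A ξ T := by
  rw [Summable.tsum_eq_zero_add (dysonD_summable ξ hA hc T)]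
  show (0:M2) + ∑' n, Bmat A ξ T * dysonW A ξ n T = _
  rw [zero_add]
  have := (ContinuousLinearMap.mul ℝ M2 (Bmat A ξ T)).map_tsum
    (dysonW_summable ξ hA hc T)
  exact ((dysonW_summable ξ hA hc T).tsum_mul_left (Bmat A ξ T))

lemma Vsol_hasDeriv (T₀ : ℝ) :
    HasDerivAt (Vsol A ξ) (Bmat A ξ T₀ * Vsol A ξ T₀) T₀ := by
  classical
  set R : ℝ := |T₀| + 1 with hR
  have hc0 : (0:ℝ) ≤ c := c_nonneg ξ hA hc
  have hsopen : IsOpen (Set.Ioo (-R) R) := isOpen_Ioo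
  have hT₀s : T₀ ∈ Set.Ioo (-R) R := by
    have h := abs_lt.1 (show |T₀| < R by simp [hR])
    exact ⟨h.1, h.2⟩
  have hWb : ∀ (n : ℕ) (x : ℝ), x ∈ Set.Ioo (-R) R →
      ‖dysonW A ξ n x‖ ≤ (c*R)^n / n.factorial := by
    intro n x hx
    refine (dysonW_bound ξ hA hc n x).trans ?_
    have hxR : |x| ≤ R := le_of_lt (abs_lt.2 ⟨hx.1, hx.2⟩)
    gcongr
  set u : ℕ → ℝ := fun n => Nat.rec (0:ℝ) (fun k _ => c * ((c*R)^k / k.factorial)) n with hu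
  have husum : Summable u := by
    rw [← summable_nat_add_iff 1]
    exact (Real.summable_pow_div_factorial (c*R)).mul_left c
  have hDb : ∀ (n : ℕ) (x : ℝ), x ∈ Set.Ioo (-R) R → ‖dysonD A ξ n x‖ ≤ u n := by
    rintro (_|n) x hx
    · simp [dysonD, hu]
    · show ‖Bmat A ξ x * dysonW A ξ n x‖ ≤ c * ((c*R)^n / n.factorial)
      calc ‖Bmat A ξ x * dysonW A ξ n x‖ ≤ ‖Bmat A ξ x‖ * ‖dysonW A ξ n x‖ := norm_mul_le _ _
        _ ≤ c * ((c * R) ^ n / n.factorial) :=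
            mul_le_mul (hc x) (hWb n x hx) (norm_nonneg _) hc0
  have hunif : TendstoUniformlyOn
      (fun (N : ℕ) (x : ℝ) => ∑ n ∈ Finset.range N, dysonD A ξ n x)
      (fun x => ∑' n, dysonD A ξ n x) Filter.atTop (Set.Ioo (-R) R) :=
    tendstoUniformlyOn_tsum_nat husum hDb
  have hderiv : ∀ (N : ℕ) (x : ℝ), x ∈ Set.Ioo (-R) R →
      HasDerivAt (fun y => ∑ n ∈ Finset.range N, dysonW A ξ n y)
        (∑ n ∈ Finset.range N, dysonD A ξ n x) x := by
    intro N x _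
    apply HasDerivAt.fun_sum
    rintro (_|k) _
    · simpa [dysonD, dysonW] using (hasDerivAt_const x (1:M2))
    · exact dysonW_succ_hasDeriv ξ hA k x
  have hfg : ∀ x ∈ Set.Ioo (-R) R,
      Filter.Tendsto (fun N => ∑ n ∈ Finset.range N, dysonW A ξ n x) Filter.atTop
        (nhds (Vsol A ξ x)) := by
    intro x _
    exact (dysonW_summable ξ hA hc x).hasSum.tendsto_sum_nat
  have := hasDerivAt_of_tendstoUniformlyOn hsopen hunif
    (Filter.Eventually.of_forall hderiv) hfg hT₀s
  rwa [dysonD_tsum ξ hA hc] at this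


lemma cont_Vsol : Continuous (Vsol A ξ) := by
  have : Differentiable ℝ (Vsol A ξ) := fun T => (Vsol_hasDeriv ξ hA hc T).differentiableAt
  exact this.continuous

omit hc in
lemma rotm_theta_hasDeriv (T : ℝ) :
    HasDerivAt (fun t => rotm (theta A ξ t))
      ((-Complex.I * ((ξ + (A T).1 : ℝ) : ℂ)) • (pauli1 * rotm (theta A ξ T))) T := by
  have hθ := theta_hasDeriv ξ hA T
  have hcos : HasDerivAt (fun t => (Real.cos (theta A ξ t) : ℂ))
      ((-Real.sin (theta A ξ T) * (ξ + (A T).1) : ℝ) : ℂ) T :=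
    ((Real.hasDerivAt_cos (theta A ξ T)).comp T hθ).ofReal_comp
  have hsin : HasDerivAt (fun t => (Real.sin (theta A ξ t) : ℂ))
      ((Real.cos (theta A ξ T) * (ξ + (A T).1) : ℝ) : ℂ) T :=
    ((Real.hasDerivAt_sin (theta A ξ T)).comp T hθ).ofReal_comp
  have h := (hcos.smul_const (1 : M2)).fun_add
    (hsin.smul_const ((-Complex.I) • pauli1))
  have heq : (fun t => (Real.cos (theta A ξ t) : ℂ) • (1:M2)
      + (Real.sin (theta A ξ t) : ℂ) • ((-Complex.I) • pauli1)) = fun t => rotm (theta A ξ t) := by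
    funext t; rw [rotm_eq]
  rw [heq] at h
  refine h.congr_deriv (Eq.symm ?_)
  rw [sigma1_rotm]
  push_cast
  match_scalars <;> ring_nf <;> simp [Complex.I_sq, Complex.sin_sq] <;> ring_nf

lemma Usol_hasDeriv (T : ℝ) :
    HasDerivAt (Usol A ξ) ((-Complex.I) • (Dwkb A ξ T * Usol A ξ T)) T := by
  have h := (rotm_theta_hasDeriv ξ hA T).fun_mul (Vsol_hasDeriv ξ hA hc T)
  refine h.congr_deriv (Eq.symm ?_)
  show (-Complex.I) • (Dwkb A ξ T * (rotm (theta A ξ T) * Vsol A ξ T)) = _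
  have e1 : rotm (theta A ξ T) * (Bmat A ξ T * Vsol A ξ T)
      = (Complex.I * ((A T).2 : ℂ)) • (pauli2 * (rotm (theta A ξ T) * Vsol A ξ T)) := by
    rw [Bmat, smul_mul_assoc, Matrix.mul_smul, ← mul_assoc, key_identity, mul_assoc]
  rw [e1, Dwkb]
  push_cast
  simp only [Matrix.add_mul, Matrix.sub_mul, smul_mul_assoc, mul_assoc]
  match_scalars <;> ring_nf <;> simp [Complex.I_sq, Complex.sin_sq] <;> ring_nf

lemma Usol_zero : Usol A ξ 0 = 1 := by
  have hθ0 : theta A ξ 0 = 0 := by simp [theta]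
  rw [Usol, hθ0, rotm_zero, Vsol_zero ξ hA hc, one_mul]

end Construction

/-- entry evaluation as a continuous linear map -/
def entryCLM (i j : Fin 2) : M2 →L[ℝ] ℂ :=
  LinearMap.mkContinuous
    { toFun := fun X => X i j,
      map_add' := fun _ _ => rfl,
      map_smul' := fun _ _ => rfl } 1
    (fun X => by show ‖X i j‖ ≤ 1 * ‖X‖; rw [one_mul]; exact entry_le_norm X i j)

lemma hasDerivAt_entry {f : ℝ → M2} {f' : M2} {t : ℝ} (h : HasDerivAt f f' t) (i j : Fin 2) :
    HasDerivAt (fun s => f s i j) (f' i j) t :=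
  (entryCLM i j).hasFDerivAt.comp_hasDerivAt t h

lemma Usol_isFundamental {A : ℝ → ℝ × ℝ} (hA : Continuous A) (ξ : ℝ) {c : ℝ}
    (hc : ∀ t, ‖Bmat A ξ t‖ ≤ c) :
    IsFundamentalSolution (Dwkb A ξ) (Usol A ξ) := by
  refine ⟨Usol_zero ξ hA hc, fun T i j => ?_⟩
  exact hasDerivAt_entry (Usol_hasDeriv ξ hA hc T) i j

section Spectral

lemma det_one_of_fundamental {A : ℝ → ℝ × ℝ} {ξ : ℝ} {U : ℝ → M2}
    (hU : IsFundamentalSolution (Dwkb A ξ) U) (T : ℝ) : (U T).det = 1 := by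
  have hf : ∀ t : ℝ, HasDerivAt (fun t => (U t).det) 0 t := by
    intro t
    have h00 := hU.2 t 0 0
    have h01 := hU.2 t 0 1
    have h10 := hU.2 t 1 0
    have h11 := hU.2 t 1 1
    have h := ((h00.fun_mul h11).fun_sub (h01.fun_mul h10))
    have e : (fun t => U t 0 0 * U t 1 1 - U t 0 1 * U t 1 0) = fun t => (U t).det := by
      funext t; rw [Matrix.det_fin_two]
    rw [e] at h
    refine h.congr_deriv (Eq.symm ?_)
    simp only [Matrix.smul_apply, Matrix.mul_apply, Fin.sum_univ_two, Dwkb, pauli1, pauli2,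
      Matrix.add_apply, Matrix.sub_apply, Matrix.cons_val', Matrix.cons_val_zero,
      Matrix.cons_val_one, Matrix.head_cons, Matrix.head_fin_const, Matrix.empty_val',
      Matrix.cons_val_fin_one, smul_eq_mul]
    norm_num
    ring
  have hd : ∀ t : ℝ, (U t).det = (U 0).det := by
    intro t
    rcases le_total 0 t with h | h
    · have := constant_of_has_deriv_right_zero (a := 0) (b := t)
        (f := fun t => (U t).det)
        (fun x _ => ((hf x).differentiableAt.continuousAt).continuousWithinAt)
        (fun x _ => (hf x).hasDerivWithinAt)
      simpa using this t ⟨h, le_rfl⟩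
    · have := constant_of_has_deriv_right_zero (a := t) (b := 0)
        (f := fun t => (U t).det)
        (fun x _ => ((hf x).differentiableAt.continuousAt).continuousWithinAt)
        (fun x _ => (hf x).hasDerivWithinAt)
      have h0 := this 0 ⟨h, le_rfl⟩
      simpa using h0.symm
  rw [hd T, hU.1, Matrix.det_one]

lemma exists_eigenvalue_near {M : M2} (hdet : M.det = 1) {z : ℂ} (hz : ‖z‖ = 1)
    {ε : ℝ} (hε : 0 ≤ ε) (h : ‖M 0 0 + M 1 1 - 2*(z.re:ℂ)‖ ≤ ε) :
    ∃ w ∈ spectrum ℂ M, ‖w - z‖ ≤ Real.sqrt ε := by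
  have hdet2 : M 0 0 * M 1 1 - M 0 1 * M 1 0 = 1 := by
    rw [← Matrix.det_fin_two]; exact hdet
  obtain ⟨t, ht⟩ : ∃ t : ℂ, t = M 0 0 + M 1 1 := ⟨_, rfl⟩
  rw [← ht] at h
  obtain ⟨s, hs⟩ : ∃ s : ℂ, s^2 = t^2 - 4 :=
    IsAlgClosed.exists_pow_nat_eq (t^2 - 4) zero_lt_two
  have hroot : ∀ w : ℂ, w^2 - t*w + 1 = 0 → w ∈ spectrum ℂ M := by
    intro w hw
    rw [spectrum.mem_iff]
    intro hunit
    rw [Matrix.isUnit_iff_isUnit_det] at hunit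
    have hdet0 : (algebraMap ℂ M2 w - M).det = 0 := by
      rw [Algebra.algebraMap_eq_smul_one, Matrix.det_fin_two]
      simp only [Matrix.sub_apply, Matrix.smul_apply, Matrix.one_apply_eq,
        Matrix.one_apply_ne (show (0:Fin 2) ≠ 1 by decide),
        Matrix.one_apply_ne (show (1:Fin 2) ≠ 0 by decide), smul_eq_mul, mul_one, mul_zero]
      linear_combination hw + hdet2 + w*ht
    rw [hdet0] at hunit
    exact (by simpa using hunit : IsUnit (0:ℂ)).ne_zero rfl
  have hwp : ((t+s)/2)^2 - t*((t+s)/2) + 1 = 0 := by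
    field_simp
    linear_combination hs
  have hwm : ((t-s)/2)^2 - t*((t-s)/2) + 1 = 0 := by
    field_simp
    linear_combination hs
  have hzz : z * (starRingEnd ℂ) z = 1 := by
    rw [Complex.mul_conj]
    norm_cast
    rw [← Complex.sq_norm, hz]; norm_num
  have h2re : z + (starRingEnd ℂ) z = 2*(z.re:ℂ) := by
    rw [Complex.add_conj]; push_cast; ring
  have hprod : (z - (t+s)/2) * (z - (t-s)/2) = (2*(z.re:ℂ) - t) * z := by
    field_simp
    linear_combination (4:ℂ) * z * h2re - (4:ℂ)*hzz - hs
  have habs : ‖z - (t+s)/2‖ * ‖z - (t-s)/2‖ ≤ ε := by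
    rw [← norm_mul, hprod, norm_mul, hz, mul_one]
    calc ‖2*(z.re:ℂ) - t‖ = ‖t - 2*(z.re:ℂ)‖ :=
          norm_sub_rev _ _
      _ ≤ ε := h
  rcases le_total (‖z - (t+s)/2‖) (‖z - (t-s)/2‖) with hle | hle
  · refine ⟨(t+s)/2, hroot _ hwp, ?_⟩
    have hsq : ‖(t+s)/2 - z‖^2 ≤ ε := by
      rw [norm_sub_rev]
      calc ‖z - (t+s)/2‖^2
          ≤ ‖z - (t+s)/2‖ * ‖z - (t-s)/2‖ := by
            rw [sq]; exact mul_le_mul_of_nonneg_left hle (norm_nonneg _)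
        _ ≤ ε := habs
    have h2 := Real.sqrt_le_sqrt hsq
    rwa [Real.sqrt_sq (norm_nonneg _)] at h2
  · refine ⟨(t-s)/2, hroot _ hwm, ?_⟩
    have hsq : ‖(t-s)/2 - z‖^2 ≤ ε := by
      rw [norm_sub_rev]
      calc ‖z - (t-s)/2‖^2
          ≤ ‖z - (t+s)/2‖ * ‖z - (t-s)/2‖ := by
            rw [sq]; exact mul_le_mul_of_nonneg_right hle (norm_nonneg _)
        _ ≤ ε := habs
    have h2 := Real.sqrt_le_sqrt hsq
    rwa [Real.sqrt_sq (norm_nonneg _)] at h2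

end Spectral

section Estimates

lemma Vsol_near_one {A : ℝ → ℝ × ℝ} (hA : Continuous A) (ξ : ℝ) {c ε Tper : ℝ}
    (hc : ∀ t, ‖Bmat A ξ t‖ ≤ c) (hT : 0 ≤ Tper) (hε : 0 ≤ ε)
    (hη : ∀ T ∈ Set.Icc (0:ℝ) Tper, ‖∫ s in (0:ℝ)..T, Bmat A ξ s‖ ≤ ε) :
    ‖Vsol A ξ Tper - 1‖ ≤ ε * Real.exp ((c+1)*Tper) := by
  have hc0 : 0 ≤ c := c_nonneg ξ hA hc
  set η : ℝ → M2 := fun t => ∫ s in (0:ℝ)..t, Bmat A ξ s with hηdef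
  have hηd : ∀ t : ℝ, HasDerivAt η (Bmat A ξ t) t := by
    intro t
    exact intervalIntegral.integral_hasDerivAt_right
      ((cont_Bmat ξ hA).intervalIntegrable _ _)
      ((cont_Bmat ξ hA).stronglyMeasurableAtFilter _ _) (cont_Bmat ξ hA).continuousAt
  set f : ℝ → M2 := fun t => Vsol A ξ t - 1 - η t with hfdef
  have hfd : ∀ t : ℝ, HasDerivAt f (Bmat A ξ t * Vsol A ξ t - Bmat A ξ t) t := by
    intro t
    exact ((Vsol_hasDeriv ξ hA hc t).sub_const 1).sub (hηd t)
  have hf0 : f 0 = 0 := by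
    simp only [hfdef, hηdef]
    rw [Vsol_zero ξ hA hc]
    simp
  have hbound : ∀ x ∈ Set.Ico (0:ℝ) Tper,
      ‖Bmat A ξ x * Vsol A ξ x - Bmat A ξ x‖ ≤ (c+1) * ‖f x‖ + (c+1)*ε := by
    intro x hx
    have e : Bmat A ξ x * Vsol A ξ x - Bmat A ξ x = Bmat A ξ x * (f x + η x) := by
      simp only [hfdef]
      rw [mul_add, mul_sub, mul_sub, mul_one]
      abel
    rw [e]
    calc ‖Bmat A ξ x * (f x + η x)‖ ≤ ‖Bmat A ξ x‖ * ‖f x + η x‖ := norm_mul_le _ _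
      _ ≤ c * (‖f x‖ + ε) := by
          apply mul_le_mul (hc x) ?_ (norm_nonneg _) hc0
          refine (norm_add_le _ _).trans ?_
          have := hη x ⟨hx.1, hx.2.le⟩
          linarith
      _ ≤ (c+1) * ‖f x‖ + (c+1)*ε := by nlinarith [norm_nonneg (f x)]
  have hgron := norm_le_gronwallBound_of_norm_deriv_right_le (a := 0) (b := Tper)
    (f := f) (f' := fun x => Bmat A ξ x * Vsol A ξ x - Bmat A ξ x)
    (δ := 0) (K := c+1) (ε := (c+1)*ε)
    (fun x _ => ((hfd x).differentiableAt.continuousAt).continuousWithinAt)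
    (fun x _ => (hfd x).hasDerivWithinAt)
    (by rw [hf0]; simp)
    hbound Tper ⟨hT, le_rfl⟩
  rw [gronwallBound_of_K_ne_0 (by positivity)] at hgron
  have hfT : ‖f Tper‖ ≤ ε * (Real.exp ((c+1)*Tper) - 1) := by
    calc ‖f Tper‖ ≤ 0 * Real.exp ((c + 1) * (Tper - 0))
        + (c+1)*ε / (c+1) * (Real.exp ((c + 1) * (Tper - 0)) - 1) := hgron
      _ = ε * (Real.exp ((c+1)*Tper) - 1) := by
          have h1 : c + 1 ≠ 0 := by positivity
          field_simp
          simp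
  have hV : Vsol A ξ Tper - 1 = f Tper + η Tper := by simp [hfdef]
  rw [hV]
  calc ‖f Tper + η Tper‖ ≤ ‖f Tper‖ + ‖η Tper‖ := norm_add_le _ _
    _ ≤ ε * (Real.exp ((c+1)*Tper) - 1) + ε := by
        have := hη Tper ⟨hT, le_rfl⟩
        linarith
    _ = ε * Real.exp ((c+1)*Tper) := by ring

lemma trace_est (x : ℝ) (X : M2) :
    ‖(rotm x * X) 0 0 + (rotm x * X) 1 1 - 2*(Real.cos x : ℂ)‖ ≤ 4 * ‖X - 1‖ := by
  have e : (rotm x * X) 0 0 + (rotm x * X) 1 1 - 2*(Real.cos x:ℂ)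
      = (Real.cos x:ℂ) * ((X-1) 0 0) + (-Complex.I*Real.sin x) * ((X-1) 1 0)
        + ((-Complex.I*Real.sin x) * ((X-1) 0 1) + (Real.cos x:ℂ) * ((X-1) 1 1)) := by
    simp only [rotm, Matrix.mul_apply, Fin.sum_univ_two, Matrix.sub_apply, Matrix.one_apply,
      Matrix.cons_val', Matrix.cons_val_zero, Matrix.cons_val_one, Matrix.head_cons,
      Matrix.head_fin_const, Matrix.empty_val', Matrix.cons_val_fin_one]
    norm_num
    ring
  rw [e]
  have hterm : ∀ (co : ℂ) (i j : Fin 2), ‖co‖ ≤ 1 →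
      ‖co * ((X-1) i j)‖ ≤ ‖X - 1‖ := by
    intro co i j hco
    rw [norm_mul]
    have h1 : ‖(X-1) i j‖ ≤ ‖X-1‖ := by
      exact entry_le_norm _ i j
    refine le_trans (mul_le_mul hco h1 (norm_nonneg _) zero_le_one) (by rw [one_mul])
  have hcos : ‖(Real.cos x : ℂ)‖ ≤ 1 := by
    rw [Complex.norm_real, Real.norm_eq_abs]
    exact Real.abs_cos_le_one x
  have hsin : ‖(-Complex.I*Real.sin x : ℂ)‖ ≤ 1 := by
    rw [norm_mul]
    rw [show ‖-Complex.I‖ = 1 by simp, one_mul, Complex.norm_real, Real.norm_eq_abs]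
    exact Real.abs_sin_le_one x
  calc ‖_‖ ≤ ‖(Real.cos x:ℂ) * ((X-1) 0 0)
        + (-Complex.I*Real.sin x) * ((X-1) 1 0)‖
        + ‖(-Complex.I*Real.sin x) * ((X-1) 0 1) + (Real.cos x:ℂ) * ((X-1) 1 1)‖ :=
      norm_add_le _ _
    _ ≤ (‖(Real.cos x:ℂ) * ((X-1) 0 0)‖
        + ‖(-Complex.I*Real.sin x) * ((X-1) 1 0)‖)
        + (‖(-Complex.I*Real.sin x) * ((X-1) 0 1)‖
        + ‖(Real.cos x:ℂ) * ((X-1) 1 1)‖) :=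
      add_le_add (norm_add_le _ _) (norm_add_le _ _)
    _ ≤ (‖X-1‖ + ‖X-1‖) + (‖X-1‖ + ‖X-1‖) :=
      add_le_add (add_le_add (hterm _ _ _ hcos) (hterm _ _ _ hsin))
        (add_le_add (hterm _ _ _ hsin) (hterm _ _ _ hcos))
    _ = 4 * ‖X - 1‖ := by ring

end Estimates

section Osc

lemma deriv_fst {A : ℝ → ℝ × ℝ} (hA : ContDiff ℝ 1 A) (s : ℝ) :
    HasDerivAt (fun t => (A t).1) ((deriv A s).1) s :=
  (ContinuousLinearMap.fst ℝ ℝ ℝ).hasFDerivAt.comp_hasDerivAt s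
    ((hA.differentiable one_ne_zero s).hasDerivAt)

lemma deriv_snd {A : ℝ → ℝ × ℝ} (hA : ContDiff ℝ 1 A) (s : ℝ) :
    HasDerivAt (fun t => (A t).2) ((deriv A s).2) s :=
  (ContinuousLinearMap.snd ℝ ℝ ℝ).hasFDerivAt.comp_hasDerivAt s
    ((hA.differentiable one_ne_zero s).hasDerivAt)

lemma osc_core {A : ℝ → ℝ × ℝ} (hA : ContDiff ℝ 1 A) {Tper K ξ T : ℝ}
    (hTT : T ∈ Set.Icc (0:ℝ) Tper)
    (hK : ∀ s ∈ Set.Icc (0:ℝ) Tper, |(A s).1| ≤ K ∧ |(A s).2| ≤ K ∧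
      |(deriv A s).1| ≤ K ∧ |(deriv A s).2| ≤ K)
    (hK0 : 0 ≤ K) (hξ : 2*K + 1 ≤ ξ)
    (g G : ℝ → ℝ) (hg : Continuous g) (hGb : ∀ s, |G s| ≤ 1)
    (hG : ∀ s, HasDerivAt G ((2*(ξ + (A s).1)) * g s) s) :
    |∫ s in (0:ℝ)..T, (A s).2 * g s| ≤ (2*K + 2*K*Tper)/ξ := by
  have hξ0 : (0:ℝ) < ξ := by linarith
  have hT0 : (0:ℝ) ≤ T := hTT.1
  have hsub : Set.uIcc (0:ℝ) T ⊆ Set.Icc 0 Tper := by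
    rw [Set.uIcc_of_le hT0]
    exact Set.Icc_subset_Icc le_rfl hTT.2
  set φd : ℝ → ℝ := fun s => 2*(ξ + (A s).1) with hφddef
  have hφd_pos : ∀ s ∈ Set.Icc (0:ℝ) Tper, ξ ≤ φd s := by
    intro s hs
    have := (hK s hs).1
    have := abs_le.1 this
    simp only [hφddef]
    linarith [this.1]
  have hφd_ne : ∀ s ∈ Set.Icc (0:ℝ) Tper, φd s ≠ 0 := by
    intro s hs
    exact ne_of_gt (lt_of_lt_of_le hξ0 (hφd_pos s hs))
  have hφd_cont : Continuous φd :=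
    continuous_const.mul (continuous_const.add (continuous_fst.comp hA.continuous))
  have hφd_deriv : ∀ s : ℝ, HasDerivAt φd (2*(deriv A s).1) s := by
    intro s
    simpa using (((deriv_fst hA s).const_add ξ).const_mul 2)
  set u : ℝ → ℝ := fun s => (A s).2 / φd s with hudef
  set u' : ℝ → ℝ := fun s => ((deriv A s).2 * φd s - (A s).2 * (2*(deriv A s).1)) / (φd s)^2
    with hu'def
  have hu : ∀ s ∈ Set.Icc (0:ℝ) Tper, HasDerivAt u (u' s) s := by
    intro s hs
    exact (deriv_snd hA s).div (hφd_deriv s) (hφd_ne s hs)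
  have hderivA_cont : Continuous (deriv A) := hA.continuous_deriv le_rfl
  have hu'_contOn : ContinuousOn u' (Set.Icc (0:ℝ) Tper) := by
    apply ContinuousOn.div
    · apply ContinuousOn.sub
      · exact ((continuous_snd.comp hderivA_cont).continuousOn).mul hφd_cont.continuousOn
      · exact ((continuous_snd.comp hA.continuous).continuousOn).mul
          ((continuous_const.mul (continuous_fst.comp hderivA_cont)).continuousOn)
    · exact (hφd_cont.pow 2).continuousOn
    · intro s hs
      exact pow_ne_zero 2 (hφd_ne s hs)
  -- rewrite the integral
  have hcongr : ∫ s in (0:ℝ)..T, (A s).2 * g s = ∫ s in (0:ℝ)..T, u s * (φd s * g s) := by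
    apply intervalIntegral.integral_congr
    intro s hs
    have hne := hφd_ne s (hsub hs)
    simp only [hudef]
    field_simp
  have hibp := intervalIntegral.integral_mul_deriv_eq_deriv_mul (a := 0) (b := T)
    (u := u) (v := G) (u' := u') (v' := fun s => φd s * g s)
    (fun x hx => hu x (hsub hx))
    (fun x _ => by simpa [hφddef, mul_comm] using hG x)
    ((hu'_contOn.mono hsub).intervalIntegrable)
    ((hφd_cont.mul hg).intervalIntegrable _ _)
  -- bounds
  have hub : ∀ s ∈ Set.Icc (0:ℝ) Tper, |u s| ≤ K/ξ := by
    intro s hs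
    have h2 := (hK s hs).2.1
    have hp := hφd_pos s hs
    rw [hudef, abs_div, abs_of_pos (lt_of_lt_of_le hξ0 hp)]
    exact div_le_div₀ hK0 h2 hξ0 hp
  have hu'b : ∀ s ∈ Set.Icc (0:ℝ) Tper, |u' s| ≤ 2*K/ξ := by
    intro s hs
    obtain ⟨h1, h2, h3, h4⟩ := hK s hs
    have hp := hφd_pos s hs
    have hφpos : 0 < φd s := lt_of_lt_of_le hξ0 hp
    rw [hu'def, abs_div, _root_.abs_pow, abs_of_pos hφpos]
    rw [div_le_div_iff₀ (by positivity) hξ0]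
    have hnum : |(deriv A s).2 * φd s - (A s).2 * (2*(deriv A s).1)| ≤ K * φd s + 2*K^2 := by
      refine (abs_sub _ _).trans ?_
      gcongr
      · rw [abs_mul, abs_of_pos hφpos]
        exact mul_le_mul_of_nonneg_right h4 hφpos.le
      · rw [abs_mul, abs_mul, show |(2:ℝ)| = 2 from by norm_num]
        nlinarith [mul_le_mul h2 h3 (abs_nonneg ((deriv A s).1)) hK0,
          abs_nonneg ((A s).2), abs_nonneg ((deriv A s).1)]
    calc |(deriv A s).2 * φd s - (A s).2 * (2*(deriv A s).1)| * ξ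
        ≤ (K * φd s + 2*K^2) * ξ := by
          exact mul_le_mul_of_nonneg_right hnum hξ0.le
      _ ≤ 2*K * φd s ^ 2 := by
          have h2K : 2*K ≤ φd s := by linarith
          have e1 : K * φd s * ξ ≤ K * φd s * φd s :=
            mul_le_mul_of_nonneg_left hp (mul_nonneg hK0 hφpos.le)
          have e2 : (2*K) * (K * ξ) ≤ φd s * (K * ξ) :=
            mul_le_mul_of_nonneg_right h2K (mul_nonneg hK0 hξ0.le)
          nlinarith [e1, e2]
  have hintb : |∫ s in (0:ℝ)..T, u' s * G s| ≤ 2*K/ξ * Tper := by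
    have h := intervalIntegral.norm_integral_le_of_norm_le_const (C := 2*K/ξ)
      (f := fun s => u' s * G s) (a := 0) (b := T) ?_
    · rw [Real.norm_eq_abs] at h
      refine h.trans ?_
      rw [sub_zero, _root_.abs_of_nonneg hT0]
      exact mul_le_mul_of_nonneg_left hTT.2 (by positivity)
    · intro x hx
      have hx' : x ∈ Set.Icc (0:ℝ) Tper := hsub (Set.uIoc_subset_uIcc hx)
      rw [Real.norm_eq_abs, abs_mul]
      calc |u' x| * |G x| ≤ (2*K/ξ) * 1 :=
          mul_le_mul (hu'b x hx') (hGb x) (abs_nonneg _) (by positivity)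
        _ = 2*K/ξ := mul_one _
  -- put together
  rw [hcongr, hibp]
  have h0T : (0:ℝ) ∈ Set.Icc (0:ℝ) Tper := ⟨le_rfl, le_trans hT0 hTT.2⟩
  have hb1 : |u T * G T| ≤ K/ξ := by
    rw [abs_mul]
    calc |u T| * |G T| ≤ (K/ξ) * 1 :=
        mul_le_mul (hub T hTT) (hGb T) (abs_nonneg _) (by positivity)
      _ = K/ξ := mul_one _
  have hb0 : |u 0 * G 0| ≤ K/ξ := by
    rw [abs_mul]
    calc |u 0| * |G 0| ≤ (K/ξ) * 1 :=
        mul_le_mul (hub 0 h0T) (hGb 0) (abs_nonneg _) (by positivity)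
      _ = K/ξ := mul_one _
  calc |u T * G T - u 0 * G 0 - ∫ s in (0:ℝ)..T, u' s * G s|
      ≤ |u T * G T - u 0 * G 0| + |∫ s in (0:ℝ)..T, u' s * G s| := abs_sub _ _
    _ ≤ (|u T * G T| + |u 0 * G 0|) + 2*K/ξ * Tper := add_le_add (abs_sub _ _) hintb
    _ ≤ (K/ξ + K/ξ) + 2*K/ξ * Tper := add_le_add (add_le_add hb1 hb0) le_rfl
    _ = (2*K + 2*K*Tper)/ξ := by field_simp; ring

end Osc

section Eta
variable {A : ℝ → ℝ × ℝ} (ξ : ℝ)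

lemma Bmat_eq (hA : Continuous A) (t : ℝ) :
    Bmat A ξ t = (Complex.I * (((A t).2 * Real.cos (2*theta A ξ t) : ℝ) : ℂ)) • pauli2
      - (Complex.I * (((A t).2 * Real.sin (2*theta A ξ t) : ℝ) : ℂ)) • pauli3 := by
  rw [Bmat, Bcore, smul_sub, smul_smul, smul_smul]
  match_scalars <;> push_cast <;> ring

lemma eta_eq (hA : Continuous A) (T : ℝ) :
    ∫ s in (0:ℝ)..T, Bmat A ξ s
      = (Complex.I * ((∫ s in (0:ℝ)..T, (A s).2 * Real.cos (2*theta A ξ s) : ℝ) : ℂ)) • pauli2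
      - (Complex.I * ((∫ s in (0:ℝ)..T, (A s).2 * Real.sin (2*theta A ξ s) : ℝ) : ℂ)) • pauli3 := by
  have hθ : Continuous (theta A ξ) := cont_theta ξ hA
  have hcontc : Continuous fun s => (Complex.I * (((A s).2 * Real.cos (2*theta A ξ s) : ℝ) : ℂ)) := by
    apply continuous_const.mul
    exact Complex.continuous_ofReal.comp ((continuous_snd.comp hA).mul
      (Real.continuous_cos.comp (continuous_const.mul hθ)))
  have hconts : Continuous fun s => (Complex.I * (((A s).2 * Real.sin (2*theta A ξ s) : ℝ) : ℂ)) := by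
    apply continuous_const.mul
    exact Complex.continuous_ofReal.comp ((continuous_snd.comp hA).mul
      (Real.continuous_sin.comp (continuous_const.mul hθ)))
  have e : ∫ s in (0:ℝ)..T, Bmat A ξ s
      = ∫ s in (0:ℝ)..T,
        ((Complex.I * (((A s).2 * Real.cos (2*theta A ξ s) : ℝ) : ℂ)) • pauli2
        - (Complex.I * (((A s).2 * Real.sin (2*theta A ξ s) : ℝ) : ℂ)) • pauli3) := by
    apply intervalIntegral.integral_congr
    intro s _
    exact Bmat_eq ξ hA s
  rw [e, intervalIntegral.integral_sub ((hcontc.fun_smul continuous_const).intervalIntegrable _ _)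
    ((hconts.fun_smul continuous_const).intervalIntegrable _ _)]
  rw [intervalIntegral.integral_smul_const, intervalIntegral.integral_smul_const]
  rw [intervalIntegral.integral_const_mul, intervalIntegral.integral_const_mul]
  rw [intervalIntegral.integral_ofReal, intervalIntegral.integral_ofReal]

lemma Bmat_norm_le (hA : Continuous A) (t : ℝ) :
    ‖Bmat A ξ t‖ ≤ (‖pauli2‖ + ‖pauli3‖) * |(A t).2| := by
  rw [Bmat_eq ξ hA t]
  refine (norm_sub_le _ _).trans ?_
  rw [norm_smul, norm_smul]
  have h1 : ∀ r : ℝ, ‖Complex.I * (r:ℂ)‖ = |r| := by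
    intro r
    rw [norm_mul, Complex.norm_I, one_mul, Complex.norm_real, Real.norm_eq_abs]
  rw [h1, h1, abs_mul, abs_mul]
  have hc1 := Real.abs_cos_le_one (2*theta A ξ t)
  have hs1 := Real.abs_sin_le_one (2*theta A ξ t)
  have hp2 : (0:ℝ) ≤ ‖pauli2‖ := norm_nonneg _
  have hp3 : (0:ℝ) ≤ ‖pauli3‖ := norm_nonneg _
  have ha2 : (0:ℝ) ≤ |(A t).2| := abs_nonneg _
  nlinarith [mul_le_mul_of_nonneg_left hc1 (mul_nonneg ha2 hp2), mul_le_mul_of_nonneg_left hs1 (mul_nonneg ha2 hp3)]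

lemma eta_bound (hA : ContDiff ℝ 1 A) {Tper K T : ℝ}
    (hTT : T ∈ Set.Icc (0:ℝ) Tper)
    (hK : ∀ s ∈ Set.Icc (0:ℝ) Tper, |(A s).1| ≤ K ∧ |(A s).2| ≤ K ∧
      |(deriv A s).1| ≤ K ∧ |(deriv A s).2| ≤ K)
    (hK0 : 0 ≤ K) (hξ : 2*K + 1 ≤ ξ) :
    ‖∫ s in (0:ℝ)..T, Bmat A ξ s‖ ≤ (‖pauli2‖ + ‖pauli3‖) * ((2*K + 2*K*Tper)/ξ) := by
  have hAc := hA.continuous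
  have hθ : Continuous (theta A ξ) := cont_theta ξ hAc
  rw [eta_eq ξ hAc T]
  refine (norm_sub_le _ _).trans ?_
  rw [norm_smul, norm_smul]
  have h1 : ∀ r : ℝ, ‖Complex.I * (r:ℂ)‖ = |r| := by
    intro r
    rw [norm_mul, Complex.norm_I, one_mul, Complex.norm_real, Real.norm_eq_abs]
  rw [h1, h1]
  have hgc : Continuous fun s => Real.cos (2*theta A ξ s) :=
    Real.continuous_cos.comp (continuous_const.mul hθ)
  have hgs : Continuous fun s => Real.sin (2*theta A ξ s) :=
    Real.continuous_sin.comp (continuous_const.mul hθ)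
  have hGc : ∀ s : ℝ, HasDerivAt (fun t => Real.sin (2*theta A ξ t))
      ((2*(ξ + (A s).1)) * Real.cos (2*theta A ξ s)) s := by
    intro s
    have h2θ : HasDerivAt (fun t => 2*theta A ξ t) (2*(ξ + (A s).1)) s := by
      simpa using (theta_hasDeriv ξ hAc s).const_mul 2
    have := (Real.hasDerivAt_sin (2*theta A ξ s)).comp s h2θ
    simpa [mul_comm, Function.comp_def] using this
  have hGs : ∀ s : ℝ, HasDerivAt (fun t => -Real.cos (2*theta A ξ t))
      ((2*(ξ + (A s).1)) * Real.sin (2*theta A ξ s)) s := by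
    intro s
    have h2θ : HasDerivAt (fun t => 2*theta A ξ t) (2*(ξ + (A s).1)) s := by
      simpa using (theta_hasDeriv ξ hAc s).const_mul 2
    have := ((Real.hasDerivAt_cos (2*theta A ξ s)).comp s h2θ).fun_neg
    simpa [mul_comm] using this
  have hJc := osc_core hA hTT hK hK0 hξ (fun s => Real.cos (2*theta A ξ s))
    (fun s => Real.sin (2*theta A ξ s)) hgc (fun s => Real.abs_sin_le_one _) hGc
  have hJs := osc_core hA hTT hK hK0 hξ (fun s => Real.sin (2*theta A ξ s))
    (fun s => -Real.cos (2*theta A ξ s)) hgs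
    (fun s => by rw [abs_neg]; exact Real.abs_cos_le_one _) hGs
  have hp2 : (0:ℝ) ≤ ‖pauli2‖ := norm_nonneg _
  have hp3 : (0:ℝ) ≤ ‖pauli3‖ := norm_nonneg _
  have hb : (0:ℝ) ≤ (2*K + 2*K*Tper)/ξ :=
    le_trans (abs_nonneg _) hJc
  nlinarith [mul_le_mul_of_nonneg_left hJc hp2, mul_le_mul_of_nonneg_left hJs hp3,
    mul_nonneg hp2 (abs_nonneg (∫ s in (0:ℝ)..T, (A s).2 * Real.cos (2*theta A ξ s))),
    mul_nonneg hp3 (abs_nonneg (∫ s in (0:ℝ)..T, (A s).2 * Real.sin (2*theta A ξ s)))]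

end Eta

/-- **Density of Floquet multipliers in the unit circle** (justification of Remark 3.5):
for a `C¹`, `T_per`-periodic, mean-zero forcing `A`, for every `z` on the unit circle and
every `δ > 0` there are a momentum `ξ ∈ ℝ`, a fundamental solution `U_ξ` of
`i U′ = [ξσ₁ + A₁(T)σ₁ − A₂(T)σ₂] U`, and an eigenvalue `w` of the monodromy matrix
`U_ξ(T_per)` with `|w − z| < δ`. -/
theorem floquet_multipliers_dense_in_circle
    (Tper : ℝ) (hTper : 0 < Tper)
    (A : ℝ → ℝ × ℝ) (hA : ContDiff ℝ 1 A)
    (hperiodic : ∀ T : ℝ, A (T + Tper) = A T)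
    (hmean₁ : ∫ T in (0 : ℝ)..Tper, (A T).1 = 0)
    (hmean₂ : ∫ T in (0 : ℝ)..Tper, (A T).2 = 0) :
    ∀ z : ℂ, ‖z‖ = 1 → ∀ δ : ℝ, 0 < δ →
      ∃ ξ : ℝ, ∃ U : ℝ → Matrix (Fin 2) (Fin 2) ℂ,
        IsFundamentalSolution (Dwkb A ξ) U ∧
        ∃ w ∈ spectrum ℂ (U Tper), ‖w - z‖ < δ := by
  intro z hz δ hδ
  have hAc : Continuous A := hA.continuous
  have hper : Function.Periodic A Tper := hperiodic
  have hz0 : z ≠ 0 := by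
    intro h; rw [h] at hz; simp at hz
  -- bound K on A and its derivative
  obtain ⟨K₀, hK₀⟩ := (isCompact_Icc (a := (0:ℝ)) (b := Tper)).exists_bound_of_continuousOn
    ((hAc.prodMk (hA.continuous_deriv le_rfl)).continuousOn)
  set K : ℝ := max K₀ 0 with hKdef
  have hK0 : (0:ℝ) ≤ K := le_max_right _ _
  have hK : ∀ s ∈ Set.Icc (0:ℝ) Tper, |(A s).1| ≤ K ∧ |(A s).2| ≤ K ∧
      |(deriv A s).1| ≤ K ∧ |(deriv A s).2| ≤ K := by
    intro s hs
    have h := (hK₀ s hs).trans (le_max_left K₀ 0)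
    have h1 : ‖A s‖ ≤ K := le_trans (norm_fst_le (A s, deriv A s)) h
    have h2 : ‖deriv A s‖ ≤ K := le_trans (norm_snd_le (A s, deriv A s)) h
    refine ⟨?_, ?_, ?_, ?_⟩
    · exact le_trans (by rw [← Real.norm_eq_abs]; exact norm_fst_le (A s)) h1
    · exact le_trans (by rw [← Real.norm_eq_abs]; exact norm_snd_le (A s)) h1
    · exact le_trans (by rw [← Real.norm_eq_abs]; exact norm_fst_le (deriv A s)) h2
    · exact le_trans (by rw [← Real.norm_eq_abs]; exact norm_snd_le (deriv A s)) h2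
  have hA2glob : ∀ t : ℝ, |(A t).2| ≤ K := by
    intro t
    obtain ⟨y, hy, hyeq⟩ := hper.exists_mem_Ico₀ hTper t
    rw [hyeq]
    exact (hK y ⟨hy.1, hy.2.le⟩).2.1
  set NB : ℝ := ‖pauli2‖ + ‖pauli3‖ with hNBdef
  have hNB0 : 0 ≤ NB := add_nonneg (norm_nonneg _) (norm_nonneg _)
  set c : ℝ := NB * K with hcdef
  have hc0 : 0 ≤ c := mul_nonneg hNB0 hK0
  have hc : ∀ ξ t : ℝ, ‖Bmat A ξ t‖ ≤ c := by
    intro ξ t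
    refine (Bmat_norm_le ξ hAc t).trans ?_
    exact mul_le_mul_of_nonneg_left (hA2glob t) hNB0
  set Cosc : ℝ := 2*K + 2*K*Tper with hCoscdef
  have hCosc0 : 0 ≤ Cosc := by positivity
  set Cfin : ℝ := 4 * (NB * Cosc) * Real.exp ((c+1)*Tper) with hCfindef
  have hCfin0 : 0 ≤ Cfin := by positivity
  set Ξ : ℝ := max (2*K+1) (4*Cfin/δ^2 + 1) with hΞdef
  -- choose n and ξ
  obtain ⟨n, hn⟩ := exists_nat_ge ((Ξ*Tper + Real.pi)/(2*Real.pi))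
  set ξ : ℝ := (Complex.arg z + n*(2*Real.pi))/Tper with hξdef
  have hξTper : ξ * Tper = Complex.arg z + n*(2*Real.pi) := by
    rw [hξdef, div_mul_cancel₀ _ (ne_of_gt hTper)]
  have h2πn : Ξ*Tper + Real.pi ≤ n*(2*Real.pi) := by
    rw [div_le_iff₀ (by positivity)] at hn
    linarith
  have hargz := Complex.neg_pi_lt_arg z
  have hξΞ : Ξ ≤ ξ := by
    rw [hξdef, le_div_iff₀ hTper]
    linarith
  have hξK : 2*K+1 ≤ ξ := le_trans (le_max_left _ _) hξΞ
  have hξδ : 4*Cfin/δ^2 + 1 ≤ ξ := le_trans (le_max_right _ _) hξΞ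
  have hξpos : 0 < ξ := lt_of_lt_of_le (by linarith) hξK
  have hcb : ∀ t, ‖Bmat A ξ t‖ ≤ c := hc ξ
  refine ⟨ξ, Usol A ξ, Usol_isFundamental hAc ξ hcb, ?_⟩
  -- the monodromy matrix
  have hθT : theta A ξ Tper = ξ * Tper := by
    rw [theta, hmean₁, add_zero, mul_comm]
  -- eta bound and Gronwall
  have hηb : ∀ T ∈ Set.Icc (0:ℝ) Tper, ‖∫ s in (0:ℝ)..T, Bmat A ξ s‖ ≤ NB * (Cosc/ξ) := by
    intro T hT
    exact eta_bound ξ hA hT hK hK0 hξK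
  have hVb : ‖Vsol A ξ Tper - 1‖ ≤ (NB * (Cosc/ξ)) * Real.exp ((c+1)*Tper) :=
    Vsol_near_one hAc ξ hcb hTper.le (by positivity) hηb
  -- trace estimate
  have htr := trace_est (theta A ξ Tper) (Vsol A ξ Tper)
  have hcosθ : Real.cos (theta A ξ Tper) = z.re := by
    rw [hθT, hξTper, Real.cos_add_nat_mul_two_pi, Complex.cos_arg hz0, hz, div_one]
  have habs : ‖(Usol A ξ Tper) 0 0 + (Usol A ξ Tper) 1 1 - 2*((z.re:ℝ):ℂ)‖
      ≤ δ^2/4 := by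
    have e1 : ‖(Usol A ξ Tper) 0 0 + (Usol A ξ Tper) 1 1 - 2*((z.re:ℝ):ℂ)‖
        ≤ 4 * ‖Vsol A ξ Tper - 1‖ := by
      rw [← hcosθ]
      exact htr
    refine e1.trans ?_
    have e2 : 4 * ‖Vsol A ξ Tper - 1‖ ≤ Cfin/ξ := by
      refine (mul_le_mul_of_nonneg_left hVb (by norm_num : (0:ℝ) ≤ 4)).trans (le_of_eq ?_)
      rw [hCfindef]
      field_simp
    refine e2.trans ?_
    rw [div_le_iff₀ hξpos]
    have : 4*Cfin/δ^2 * (δ^2/4) = Cfin := by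
      field_simp
    nlinarith [mul_le_mul_of_nonneg_left hξδ (show (0:ℝ) ≤ δ^2/4 by positivity)]
  obtain ⟨w, hw, hwd⟩ := exists_eigenvalue_near
    (det_one_of_fundamental (Usol_isFundamental hAc ξ hcb) Tper) hz
    (show (0:ℝ) ≤ δ^2/4 by positivity) habs
  refine ⟨w, hw, lt_of_le_of_lt hwd ?_⟩
  rw [show δ^2/4 = (δ/2)^2 by ring, Real.sqrt_sq (by positivity)]
  linarith
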